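/- arXiv:math/0204135 — 11 statements merged into one kernel-verified Lean document; each statement's English description precedes it below -/
import Mathlib

section
/- A linearly ordered field that is not Dedekind complete is totally disconnected in its order topology. -/
lemma cut_separation {F : Type*} [Field F] [LinearOrder F] [IsStrictOrderedRing F]
    [TopologicalSpace F] [OrderTopology F]
    (C : Set F) (hne : C.Nonempty) (hnu : C ≠ Set.univ)
    (hdc : ∀ x ∈ C, ∀ y : F, y ≤ x → y ∈ C) (hnl : ¬∃ l, IsLUB C l)
    {S : Set F} (hS : IsPreconnected S) {a b : F} (ha : a ∈ S) (hb : b ∈ S)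
    (hab : a < b) : False := by
  obtain ⟨c₀, hc₀⟩ := hne
  obtain ⟨u, hu⟩ : ∃ u, u ∉ C := by
    by_contra h
    push_neg at h
    exact hnu (Set.eq_univ_of_forall h)
  have hcu : c₀ < u := by
    by_contra h
    exact hu (hdc c₀ hc₀ u (not_lt.1 h))
  -- affine order iso e x = k * x + m with e c₀ = a, e u = b
  set k : F := (b - a) / (u - c₀) with hk
  have hkpos : 0 < k := div_pos (sub_pos.2 hab) (sub_pos.2 hcu)
  set m : F := a - k * c₀ with hm
  set e : F ≃o F := (OrderIso.mulLeft₀ k hkpos).trans (OrderIso.addRight m) with he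
  have heval : ∀ x, e x = k * x + m := fun x => rfl
  have hea : e c₀ = a := by simp [heval, hm]
  have heb : e u = b := by
    have h : k * (u - c₀) = b - a := by
      rw [hk]; exact div_mul_cancel₀ _ (sub_ne_zero.2 hcu.ne')
    have h2 : k * u - k * c₀ = b - a := by rw [← h]; ring
    rw [heval, hm]; linarith
  set C' : Set F := e '' C with hC'
  have hdc' : ∀ x ∈ C', ∀ y : F, y ≤ x → y ∈ C' := by
    rintro x ⟨c, hc, rfl⟩ y hy
    exact ⟨e.symm y, hdc c hc _ (by simpa using e.le_iff_le.1 (by simpa using hy)), by simp⟩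
  have hnl' : ¬∃ l, IsLUB C' l := by
    rintro ⟨l, hl⟩
    exact hnl ⟨e.symm l, e.isLUB_image.1 hl⟩
  have haC' : a ∈ C' := ⟨c₀, hc₀, hea⟩
  have hbC' : b ∉ C' := by
    rintro ⟨c, hc, hcb⟩
    exact hu (hdc c hc u (e.le_iff_le.1 (by rw [hcb, heb])))
  set U : Set F := {x | ∃ c ∈ C', x < c} with hU
  set V : Set F := {x | ∃ d ∉ C', d < x} with hV
  have hUopen : IsOpen U := by
    have : U = ⋃ c ∈ C', Set.Iio c := by
      ext x; simp [hU]
    rw [this]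
    exact isOpen_biUnion fun c _ => isOpen_Iio
  have hVopen : IsOpen V := by
    have : V = ⋃ d ∈ C'ᶜ, Set.Ioi d := by
      ext x; simp [hV]
    rw [this]
    exact isOpen_biUnion fun d _ => isOpen_Ioi
  have hcover : S ⊆ U ∪ V := by
    intro x _
    by_contra hx
    simp only [Set.mem_union, hU, hV, Set.mem_setOf_eq, not_or, not_exists] at hx
    push_neg at hx
    obtain ⟨h1, h2⟩ := hx
    apply hnl'
    refine ⟨x, fun c hc => h1 c hc, fun y hy => ?_⟩
    by_contra hyx
    push_neg at hyx
    have hyC : y ∈ C' := by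
      by_contra hyn
      exact absurd (h2 y hyn) (not_le.2 hyx)
    -- y is an upper bound in C', so y is greatest element, hence LUB
    exact hnl' ⟨y, ⟨fun c hc => hy hc, fun z hz => hz hyC⟩⟩
  have haU : a ∈ U := by
    -- C' has no maximum
    by_contra h
    simp only [hU, Set.mem_setOf_eq, not_exists] at h
    push_neg at h
    exact hnl' ⟨a, ⟨fun c hc => h c hc, fun z hz => hz haC'⟩⟩
  have hbV : b ∈ V := by
    by_contra h
    simp only [hV, Set.mem_setOf_eq, not_exists] at h
    push_neg at h
    -- everything below b is in C', b ∉ C' ⇒ b is LUB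
    refine hnl' ⟨b, ⟨fun c hc => ?_, fun y hy => ?_⟩⟩
    · by_contra hlt
      push_neg at hlt
      exact hbC' (hdc' c hc b hlt.le)
    · by_contra hlt
      push_neg at hlt
      have hyC : y ∈ C' := by
        by_contra hyn
        exact absurd (h y hyn) (not_le.2 hlt)
      exact hnl' ⟨y, ⟨fun c hc => hy hc, fun z hz => hz hyC⟩⟩
  obtain ⟨x, _, ⟨c, hc, hxc⟩, ⟨d, hd, hdx⟩⟩ :=
    hS U V hUopen hVopen hcover ⟨a, ha, haU⟩ ⟨b, hb, hbV⟩
  exact hd (hdc' c hc d (hdx.trans hxc).le)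

/-- A linearly ordered field that is not Dedekind complete is totally
disconnected in its order topology. -/
theorem dedekind_incomplete_totallyDisconnected (F : Type*) [Field F] [LinearOrder F] [IsStrictOrderedRing F]
    [TopologicalSpace F] [OrderTopology F]
    (hinc : ∃ C : Set F, C.Nonempty ∧ C ≠ Set.univ ∧
      (∀ x ∈ C, ∀ y : F, y ≤ x → y ∈ C) ∧ ¬∃ l, IsLUB C l) :
    TotallyDisconnectedSpace F := by
  obtain ⟨C, hne, hnu, hdc, hnl⟩ := hinc
  refine ⟨fun S _ hS => ?_⟩
  intro a ha b hb
  rcases lt_trichotomy a b with h | h | h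
  · exact absurd (cut_separation C hne hnu hdc hnl hS ha hb h) not_false
  · exact h
  · exact absurd (cut_separation C hne hnu hdc hnl hS hb ha h) not_false
end

section
/- In a linearly ordered field that is not Dedekind complete, there exists a continuous function from the field to itself that does not satisfy the intermediate value property: there exist points a < b and a value y strictly between f(a) and f(b) such that y is not attained by f on [a,b]. -/
/-- In a linearly ordered field that is not Dedekind complete, there is a
continuous function failing the intermediate value property. -/
theorem dedekind_incomplete_no_IVT (F : Type*) [Field F] [LinearOrder F] [IsStrictOrderedRing F]
    [TopologicalSpace F] [OrderTopology F]
    (hinc : ∃ C : Set F, C.Nonempty ∧ C ≠ Set.univ ∧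
      (∀ x ∈ C, ∀ y : F, y ≤ x → y ∈ C) ∧ ¬∃ l, IsLUB C l) :
    ∃ f : F → F, Continuous f ∧ ∃ a b y : F, a < b ∧
      y ∈ Set.Ioo (min (f a) (f b)) (max (f a) (f b)) ∧
      ∀ x ∈ Set.Icc a b, f x ≠ y := by
  classical
  obtain ⟨C, hne, hnuniv, hdc, hnolub⟩ := hinc
  -- C is open
  have hCopen : IsOpen C := by
    rw [isOpen_iff_mem_nhds]
    intro x hx
    have : ∃ y ∈ C, x < y := by
      by_contra h
      push_neg at h
      exact hnolub ⟨x, fun c hc => h c hc, fun z hz => hz hx⟩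
    obtain ⟨y, hy, hxy⟩ := this
    exact Filter.mem_of_superset (Iio_mem_nhds hxy) (fun z hz => hdc y hy z (le_of_lt hz))
  -- Cᶜ is open
  have hCcopen : IsOpen Cᶜ := by
    rw [isOpen_iff_mem_nhds]
    intro x hx
    have hub : x ∈ upperBounds C := by
      intro c hc
      by_contra h
      exact hx (hdc c hc x (le_of_not_ge h))
    have : ∃ z ∈ upperBounds C, z < x := by
      by_contra h
      push_neg at h
      exact hnolub ⟨x, hub, fun z hz => h z hz⟩
    obtain ⟨z, hz, hzx⟩ := this
    refine Filter.mem_of_superset (Ioi_mem_nhds hzx) (fun w hw hwC => ?_)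
    exact absurd (hz hwC) (not_le_of_gt hw)
  set f : F → F := fun x => if x ∈ C then 0 else 1 with hf
  have hcont : Continuous f := by
    rw [continuous_def]
    intro s hs
    have : f ⁻¹' s = (if (0:F) ∈ s then C else ∅) ∪ (if (1:F) ∈ s then Cᶜ else ∅) := by
      ext x
      by_cases hx : x ∈ C <;> simp only [hf, Set.mem_preimage, hx, if_pos, if_neg,
        Set.mem_union] <;> split_ifs <;> simp_all
    rw [this]
    split_ifs <;> simp [hCopen, hCcopen]
  obtain ⟨a, ha⟩ := hne
  obtain ⟨b, hb⟩ : ∃ b, b ∉ C := by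
    by_contra h
    push_neg at h
    exact hnuniv (Set.eq_univ_of_forall h)
  have hab : a < b := by
    by_contra h
    exact hb (hdc a ha b (le_of_not_gt h))
  have hfa : f a = 0 := if_pos ha
  have hfb : f b = 1 := if_neg hb
  refine ⟨f, hcont, a, b, 1/2, hab, ?_, ?_⟩
  · rw [hfa, hfb]
    constructor <;> norm_num
  · intro x _ hx
    by_cases h : x ∈ C
    · rw [hf] at hx; simp only [if_pos h] at hx; norm_num at hx
    · rw [hf] at hx; simp only [if_neg h] at hx; norm_num at hx
end

section
/- If a linearly ordered field is Dedekind complete, then every continuous injective function defined on a closed bounded interval [a,b] maps every interior point of [a,b] to an interior point of the image f([a,b]). -/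
/-- In a Dedekind complete linearly ordered field, every continuous injective
function on `[a,b]` maps interior points of `[a,b]` to interior points of the
image `f '' [a,b]`. -/
theorem dedekind_complete_interior_to_interior (F : Type*) [Field F] [LinearOrder F] [IsStrictOrderedRing F]
    [TopologicalSpace F] [OrderTopology F]
    (hcomp : ∀ S : Set F, S.Nonempty → BddAbove S → ∃ l, IsLUB S l)
    (a b : F) (hab : a < b) (f : F → F)
    (hf : ContinuousOn f (Set.Icc a b)) (hinj : Set.InjOn f (Set.Icc a b)) :
    ∀ c ∈ interior (Set.Icc a b), f c ∈ interior (f '' Set.Icc a b) := by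
  classical
  letI : SupSet F :=
    ⟨fun s => if h : s.Nonempty ∧ BddAbove s then (hcomp s h.1 h.2).choose else 0⟩
  have hsup : ∀ s : Set F,
      sSup s = if h : s.Nonempty ∧ BddAbove s then (hcomp s h.1 h.2).choose else 0 :=
    fun _ => rfl
  have hlub : ∀ s : Set F, BddAbove s → s.Nonempty → IsLUB s (sSup s) := by
    intro s hb hne
    rw [hsup, dif_pos ⟨hne, hb⟩]
    exact (hcomp s hne hb).choose_spec
  letI lat : ConditionallyCompleteLattice F :=
    conditionallyCompleteLatticeOfsSup F
      (fun x y => ⟨max x y, by simp [upperBounds]⟩)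
      (fun x y => ⟨min x y, by simp [lowerBounds]⟩)
      hlub
  letI : ConditionallyCompleteLinearOrder F :=
    { lat, (inferInstance : LinearOrder F) with
      csSup_of_not_bddAbove := by
        intro s hs
        rw [hsup, hsup, dif_neg (by tauto), dif_neg (by simp)]
      csInf_of_not_bddBelow := by
        intro s hs
        have h1 : lowerBounds s = ∅ := by
          rw [Set.eq_empty_iff_forall_notMem]
          intro x hx
          exact hs ⟨x, hx⟩
        have h2 : lowerBounds (∅ : Set F) = Set.univ := by
          simp [lowerBounds]
        show sSup (lowerBounds s) = sSup (lowerBounds (∅ : Set F))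
        rw [h1, h2, hsup, hsup, dif_neg (by simp), dif_neg]
        rintro ⟨-, c, hc⟩
        exact absurd (hc (Set.mem_univ (c + 1))) (by simp) }
  intro c hc
  rw [interior_Icc] at hc
  obtain ⟨hac, hcb⟩ := hc
  have hcmem : c ∈ Set.Icc a b := ⟨hac.le, hcb.le⟩
  have hamem : a ∈ Set.Icc a b := Set.left_mem_Icc.2 hab.le
  have hbmem : b ∈ Set.Icc a b := Set.right_mem_Icc.2 hab.le
  rcases ContinuousOn.strictMonoOn_of_injOn_Icc' hab.le hf hinj with hm | hm
  · have h1 : f a < f c := hm hamem hcmem hac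
    have h2 : f c < f b := hm hcmem hbmem hcb
    have hsub : Set.Ioo (f a) (f b) ⊆ f '' Set.Icc a b :=
      (intermediate_value_Ioo hab.le hf).trans (Set.image_mono Set.Ioo_subset_Icc_self)
    exact interior_maximal hsub isOpen_Ioo ⟨h1, h2⟩
  · have h1 : f b < f c := hm hcmem hbmem hcb
    have h2 : f c < f a := hm hamem hcmem hac
    have hsub : Set.Ioo (f b) (f a) ⊆ f '' Set.Icc a b :=
      (intermediate_value_Ioo' hab.le hf).trans (Set.image_mono Set.Ioo_subset_Icc_self)
    exact interior_maximal hsub isOpen_Ioo ⟨h1, h2⟩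
end

section
/- If a linearly ordered field is Dedekind complete, then every continuous injective function on a nondegenerate closed bounded interval is an open map onto its image. -/
/-- From Dedekind completeness, `[a,b]` is compact. -/
theorem dedekind_complete_isCompact_Icc (F : Type*) [Field F] [LinearOrder F] [IsStrictOrderedRing F]
    [TopologicalSpace F] [OrderTopology F]
    (hcomp : ∀ S : Set F, S.Nonempty → BddAbove S → ∃ l, IsLUB S l)
    (a b : F) : IsCompact (Set.Icc a b) := by
  classical
  letI : SupSet F := ⟨fun s => if h : s.Nonempty ∧ BddAbove s then (hcomp s h.1 h.2).choose
    else 0⟩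
  have h0 : ∀ s : Set F, ¬(s.Nonempty ∧ BddAbove s) → sSup s = 0 := by
    intro s hs
    show (if h : s.Nonempty ∧ BddAbove s then (hcomp s h.1 h.2).choose else 0) = 0
    exact dif_neg hs
  have hlub : ∀ s : Set F, BddAbove s → s.Nonempty → IsLUB s (sSup s) := by
    intro s hb hne
    have : sSup s = (hcomp s hne hb).choose := by
      show (if h : s.Nonempty ∧ BddAbove s then (hcomp s h.1 h.2).choose else 0)
        = (hcomp s hne hb).choose
      rw [dif_pos ⟨hne, hb⟩]
    rw [this]
    exact (hcomp s hne hb).choose_spec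
  letI C : ConditionallyCompleteLattice F := conditionallyCompleteLatticeOfLatticeOfsSup F hlub
  letI : ConditionallyCompleteLinearOrder F :=
    { C, (inferInstance : LinearOrder F) with
      csSup_of_not_bddAbove := by
        intro s hs
        show sSup s = sSup (∅ : Set F)
        rw [h0 s (by tauto), h0 ∅ (by simp)]
      csInf_of_not_bddBelow := by
        intro s hs
        have hemp : lowerBounds s = ∅ := by
          rw [Set.eq_empty_iff_forall_notMem]
          intro x hx
          exact hs ⟨x, hx⟩
        show sSup (lowerBounds s) = sSup (lowerBounds (∅ : Set F))
        have huniv : lowerBounds (∅ : Set F) = Set.univ := by simp [lowerBounds]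
        rw [hemp, huniv, h0 ∅ (by simp), h0 Set.univ (by simp [not_bddAbove_univ])] }
  haveI : OrderTopology F := ‹OrderTopology F›
  exact isCompact_Icc


/-- In a Dedekind complete linearly ordered field, every continuous injective
function on a nondegenerate closed bounded interval is an open map onto its
image: the image of every relatively open subset of `[a,b]` is relatively open
in `f '' [a,b]`. -/
theorem dedekind_complete_open_map (F : Type*) [Field F] [LinearOrder F] [IsStrictOrderedRing F]
    [TopologicalSpace F] [OrderTopology F]
    (hcomp : ∀ S : Set F, S.Nonempty → BddAbove S → ∃ l, IsLUB S l)
    (a b : F) (hab : a < b) (f : F → F)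
    (hf : ContinuousOn f (Set.Icc a b)) (hinj : Set.InjOn f (Set.Icc a b)) :
    ∀ V : Set F, (∃ U, IsOpen U ∧ V = U ∩ Set.Icc a b) →
      ∃ W, IsOpen W ∧ f '' V = W ∩ f '' Set.Icc a b := by
  rintro V ⟨U, hU, rfl⟩
  have hIcc : IsCompact (Set.Icc a b) := dedekind_complete_isCompact_Icc F hcomp a b
  have hK : IsCompact (Set.Icc a b ∩ Uᶜ) := hIcc.inter_right hU.isClosed_compl
  have hKf : IsCompact (f '' (Set.Icc a b ∩ Uᶜ)) :=
    hK.image_of_continuousOn (hf.mono Set.inter_subset_left)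
  refine ⟨(f '' (Set.Icc a b ∩ Uᶜ))ᶜ, hKf.isClosed.isOpen_compl, ?_⟩
  ext y
  constructor
  · rintro ⟨x, ⟨hxU, hxI⟩, rfl⟩
    refine ⟨?_, ⟨x, hxI, rfl⟩⟩
    rintro ⟨z, ⟨hzI, hzU⟩, hz⟩
    exact hzU (hinj hzI hxI hz ▸ hxU)
  · rintro ⟨hyW, ⟨x, hxI, rfl⟩⟩
    refine ⟨x, ⟨?_, hxI⟩, rfl⟩
    by_contra hxU
    exact hyW ⟨x, ⟨hxI, hxU⟩, rfl⟩
end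

section
/- If an ordered field F has a regular gap, then for any a < b in F there is a regular gap C of F with a ∈ C and b ∉ C; explicitly, any regular gap of F can be additively translated to a regular gap lying strictly between a and b. -/
/-- If an ordered field has a regular gap, then between any `a < b` there is a
regular gap `C` with `a ∈ C` and `b ∉ C`. -/
theorem regular_gap_translate (F : Type*) [Field F] [LinearOrder F] [IsStrictOrderedRing F]
    (U : Set F) (hUne : U.Nonempty) (hUproper : U ≠ Set.univ)
    (hUdc : ∀ x ∈ U, ∀ y : F, y ≤ x → y ∈ U)
    (hUgap : ¬∃ l, IsLUB U l)
    (hUreg : ∀ ε : F, 0 < ε → ¬(Set.image (fun c => c + ε) U) ⊆ U)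
    (a b : F) (hab : a < b) :
    ∃ C : Set F, C.Nonempty ∧ C ≠ Set.univ ∧
      (∀ x ∈ C, ∀ y : F, y ≤ x → y ∈ C) ∧ (¬∃ l, IsLUB C l) ∧
      (∀ ε : F, 0 < ε → ¬(Set.image (fun c => c + ε) C) ⊆ C) ∧ a ∈ C ∧ b ∉ C := by
  -- Use regularity with ε = b - a to find c ∈ U with c + (b - a) ∉ U.
  obtain ⟨z, hz, hznotU⟩ := Set.not_subset.1 (hUreg (b - a) (sub_pos.2 hab))
  obtain ⟨c, hcU, rfl⟩ := hz
  set t := c - a with ht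
  refine ⟨{x : F | x + t ∈ U}, ⟨a, by simpa [ht] using hcU⟩, ?_, ?_, ?_, ?_,
    by simpa [ht] using hcU, ?_⟩
  · intro h
    have hb : b ∈ {x : F | x + t ∈ U} := by rw [h]; trivial
    have hb' : b + t ∈ U := hb
    refine hznotU ?_
    show c + (b - a) ∈ U
    have heq : c + (b - a) = b + t := by rw [ht]; ring
    rwa [heq]
  · intro x hx y hy
    exact hUdc _ hx _ (by simpa using add_le_add_right hy t)
  · rintro ⟨l, hl⟩
    refine hUgap ⟨l + t, ?_, ?_⟩
    · intro y hy
      have : y - t ∈ {x : F | x + t ∈ U} := by simpa using hy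
      have := hl.1 this
      linarith
    · intro m hm
      have : m - t ∈ upperBounds {x : F | x + t ∈ U} := by
        intro x hx
        have := hm hx
        linarith
      have := hl.2 this
      linarith
  · intro ε hε hsub
    obtain ⟨w, hw, hwnot⟩ := Set.not_subset.1 (hUreg ε hε)
    obtain ⟨y, hyU, rfl⟩ := hw
    have hyC : y - t ∈ {x : F | x + t ∈ U} := by simpa using hyU
    have h2 : y - t + ε + t ∈ U := hsub ⟨y - t, hyC, rfl⟩
    refine hwnot ?_
    show y + ε ∈ U
    have heq : y + ε = y - t + ε + t := by ring
    rwa [heq]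
  · intro hb
    have hb' : b + t ∈ U := hb
    refine hznotU ?_
    show c + (b - a) ∈ U
    have heq : c + (b - a) = b + t := by rw [ht]; ring
    rwa [heq]
end

section
/- For an ordered field F of a given cofinality κ: F is Scott complete (every function F → F that is Cauchy at infinity converges at infinity) if and only if F has no divergent Cauchy net of length κ. -/
open Cardinal Set

private lemma tri_half {F : Type*} [Field F] [LinearOrder F] [IsStrictOrderedRing F] {a b L ε : F}
    (h1 : |a - b| < ε / 2) (h2 : |b - L| < ε / 2) : |a - L| < ε := by
  calc |a - L| = |(a - b) + (b - L)| := by ring_nf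
    _ ≤ |a - b| + |b - L| := abs_add_le _ _
    _ < ε / 2 + ε / 2 := add_lt_add h1 h2
    _ = ε := add_halves ε

/-- An ordered field of cofinality `κ` is Scott complete (every function `F → F`
Cauchy at infinity converges at infinity) iff it has no divergent Cauchy net of
length `κ`. -/
theorem scott_complete_iff_no_divergent_cauchy_net (F : Type*) [Field F] [LinearOrder F] [IsStrictOrderedRing F]
    (κ : Cardinal)
    (hκ : κ = sInf {c : Cardinal | ∃ S : Set F, ¬BddAbove S ∧ Cardinal.mk S = c}) :
    ((∀ f : F → F,
        (∀ ε : F, 0 < ε → ∃ d : F, ∀ x y : F, d ≤ x → d ≤ y → |f x - f y| < ε) →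
        ∃ L : F, ∀ ε : F, 0 < ε → ∃ d : F, ∀ x : F, d ≤ x → |f x - L| < ε) ↔
      ¬∃ x : κ.ord.ToType → F,
        (∀ ε : F, 0 < ε → ∃ α₀ : κ.ord.ToType,
          ∀ α β : κ.ord.ToType, α₀ ≤ α → α₀ ≤ β → |x α - x β| < ε) ∧
        ¬∃ L : F, ∀ ε : F, 0 < ε → ∃ α₀ : κ.ord.ToType,
          ∀ α : κ.ord.ToType, α₀ ≤ α → |x α - L| < ε) := by
  -- the defining set is nonempty (univ is unbounded)
  have hne : {c : Cardinal | ∃ S : Set F, ¬BddAbove S ∧ Cardinal.mk S = c}.Nonempty :=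
    ⟨Cardinal.mk (Set.univ : Set F), Set.univ, not_bddAbove_univ, rfl⟩
  have hmem : ∃ S : Set F, ¬BddAbove S ∧ Cardinal.mk S = κ := by
    rw [hκ]; exact csInf_mem hne
  obtain ⟨S, hSunb, hScard⟩ := hmem
  -- every set of cardinality < κ is bounded above
  have hbdd : ∀ s : Set F, Cardinal.mk s < κ → BddAbove s := by
    intro s hs
    by_contra h
    have : Cardinal.mk s ∈ {c : Cardinal | ∃ S : Set F, ¬BddAbove S ∧ Cardinal.mk S = c} :=
      ⟨s, h, rfl⟩
    exact absurd (hκ ▸ csInf_le' this) (not_le.mpr hs)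
  -- an unbounded function g : κ.ord.ToType → F
  have hcardeq : Cardinal.mk (κ.ord.ToType) = Cardinal.mk S := by
    rw [Cardinal.mk_toType, Cardinal.card_ord, hScard]
  obtain ⟨eqv⟩ := Cardinal.eq.mp hcardeq
  set g : κ.ord.ToType → F := fun α => (eqv α : F) with hgdef
  have hg : ∀ t : F, ∃ α, t < g α := by
    intro t
    obtain ⟨y, hyS, hty⟩ := not_bddAbove_iff.mp hSunb t
    refine ⟨eqv.symm ⟨y, hyS⟩, ?_⟩
    simpa [hgdef] using hty
  -- κ is infinite
  have hκinf : ℵ₀ ≤ κ := by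
    by_contra h
    exact hSunb ((Cardinal.lt_aleph0_iff_set_finite.mp (hScard ▸ not_le.mp h)).bddAbove)
  -- initial segments Iic have cardinality < κ
  have hseg : ∀ α : κ.ord.ToType, Cardinal.mk (Set.Iic α) < κ := by
    intro α
    have h1 : Cardinal.mk (Set.Iio α) < κ := Cardinal.mk_Iio_ord_toType α
    have h2 : Cardinal.mk (Set.Iic α) ≤ Cardinal.mk (Set.Iio α) + 1 := by
      have : Set.Iic α = insert α (Set.Iio α) := by
        ext x; simp [le_iff_lt_or_eq, or_comm]
      rw [this]; exact Cardinal.mk_insert_le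
    exact lt_of_le_of_lt h2 (Cardinal.add_lt_of_lt hκinf h1 (lt_of_lt_of_le Cardinal.one_lt_aleph0 hκinf))
  -- define e α := an upper bound of g '' Iic α
  have hEb : ∀ α : κ.ord.ToType, ∃ b : F, ∀ β ≤ α, g β ≤ b := by
    intro α
    obtain ⟨b, hb⟩ := hbdd _ (lt_of_le_of_lt Cardinal.mk_image_le (hseg α))
    exact ⟨b, fun β hβ => hb ⟨β, hβ, rfl⟩⟩
  choose e he using hEb
  -- e is eventually large
  have hElarge : ∀ t : F, ∃ α₀ : κ.ord.ToType, ∀ α, α₀ ≤ α → t < e α := by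
    intro t
    obtain ⟨β, hβ⟩ := hg t
    exact ⟨β, fun α hα => lt_of_lt_of_le hβ (he α β hα)⟩
  -- images of Iio under e are bounded
  have hEseg : ∀ α₀ : κ.ord.ToType, ∃ d : F, ∀ β, β < α₀ → e β ≤ d := by
    intro α₀
    obtain ⟨d, hd⟩ := hbdd (e '' Set.Iio α₀)
      (lt_of_le_of_lt Cardinal.mk_image_le
        (lt_of_le_of_lt (Cardinal.mk_le_mk_of_subset Set.Iio_subset_Iic_self) (hseg α₀)))
    exact ⟨d, fun β hβ => hd ⟨β, hβ, rfl⟩⟩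
  constructor
  · -- Scott complete → no divergent Cauchy net
    intro hScott
    rintro ⟨x, hxC, hxD⟩
    apply hxD
    -- index function j : for t, least α with t < e α
    have hjex : ∀ t : F, ∃ α : κ.ord.ToType, t < e α := by
      intro t; obtain ⟨α₀, h⟩ := hElarge t; exact ⟨α₀, h α₀ le_rfl⟩
    set j : F → κ.ord.ToType := fun t =>
      (IsWellFounded.wf (r := ((· < ·) : κ.ord.ToType → κ.ord.ToType → Prop))).min
        {α | t < e α} (hjex t) with hjdef
    have hjmem : ∀ t : F, t < e (j t) :=
      fun t => (IsWellFounded.wf).min_mem {α | t < e α} (hjex t)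
    have hjmin : ∀ t : F, ∀ α, α < j t → ¬ t < e α := by
      intro t α hα h
      exact (IsWellFounded.wf).not_lt_min {α | t < e α} h hα
    -- if t is large, j t is large
    have hjlarge : ∀ α₀ : κ.ord.ToType, ∃ d : F, ∀ t, d ≤ t → α₀ ≤ j t := by
      intro α₀
      obtain ⟨d, hd⟩ := hEseg α₀
      refine ⟨d, fun t ht => not_lt.mp fun hlt => ?_⟩
      exact absurd (hjmem t) (not_lt.mpr (le_trans (hd _ hlt) ht))
    set f : F → F := fun t => x (j t) with hfdef
    have hfC : ∀ ε : F, 0 < ε → ∃ d : F, ∀ s t : F, d ≤ s → d ≤ t → |f s - f t| < ε := by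
      intro ε hε
      obtain ⟨α₀, hα₀⟩ := hxC ε hε
      obtain ⟨d, hd⟩ := hjlarge α₀
      exact ⟨d, fun s t hs ht => hα₀ _ _ (hd s hs) (hd t ht)⟩
    obtain ⟨L, hL⟩ := hScott f hfC
    refine ⟨L, fun ε hε => ?_⟩
    have hε2 : 0 < ε / 2 := by positivity
    obtain ⟨α₁, hα₁⟩ := hxC (ε / 2) hε2
    obtain ⟨d, hd⟩ := hL (ε / 2) hε2
    obtain ⟨d₁, hd₁⟩ := hjlarge α₁
    refine ⟨α₁, fun α hα => ?_⟩
    have ht1 : d ≤ max d d₁ := le_max_left _ _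
    have ht2 : α₁ ≤ j (max d d₁) := hd₁ _ (le_max_right _ _)
    exact tri_half (hα₁ α _ hα ht2) (hd _ ht1)
  · -- no divergent Cauchy net → Scott complete
    intro hNoDiv f hfC
    set y : κ.ord.ToType → F := fun α => f (e α) with hydef
    have hyC : ∀ ε : F, 0 < ε → ∃ α₀ : κ.ord.ToType,
        ∀ α β : κ.ord.ToType, α₀ ≤ α → α₀ ≤ β → |y α - y β| < ε := by
      intro ε hε
      obtain ⟨d, hd⟩ := hfC ε hε
      obtain ⟨α₀, hα₀⟩ := hElarge d
      exact ⟨α₀, fun α β hα hβ => hd _ _ (le_of_lt (hα₀ α hα)) (le_of_lt (hα₀ β hβ))⟩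
    have hyL : ∃ L : F, ∀ ε : F, 0 < ε → ∃ α₀ : κ.ord.ToType,
        ∀ α : κ.ord.ToType, α₀ ≤ α → |y α - L| < ε := by
      by_contra h
      exact hNoDiv ⟨y, hyC, h⟩
    obtain ⟨L, hL⟩ := hyL
    refine ⟨L, fun ε hε => ?_⟩
    have hε2 : 0 < ε / 2 := by positivity
    obtain ⟨d, hd⟩ := hfC (ε / 2) hε2
    obtain ⟨α₀, hα₀⟩ := hL (ε / 2) hε2
    obtain ⟨β, hβ⟩ := hElarge d
    refine ⟨d, fun t ht => ?_⟩
    have h1 : d ≤ e (max α₀ β) := le_of_lt (hβ _ (le_max_right _ _))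
    exact tri_half (hd t _ ht h1) (hα₀ _ (le_max_left _ _))
end

section
/- If f : F → F is a Cauchy-at-infinity function on an ordered field F, then the set C = {z ∈ F : for all t there exists x ≥ t with z ≤ f(x)} is a downward-closed set, and C is regular in the sense that for every ε > 0 in F, C + ε is not contained in C. -/
/-- For a function `f` Cauchy at infinity on an ordered field, the set
`C = {z : ∀ t, ∃ x ≥ t, z ≤ f x}` is downward closed and regular. -/
theorem cauchy_at_infinity_regular_cut (F : Type*) [Field F] [LinearOrder F] [IsStrictOrderedRing F]
    (f : F → F)
    (hf : ∀ ε : F, 0 < ε → ∃ d : F, ∀ x y : F, d ≤ x → d ≤ y → |f x - f y| < ε) :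
    (∀ z ∈ {z : F | ∀ t : F, ∃ x : F, t ≤ x ∧ z ≤ f x}, ∀ w : F, w ≤ z →
      w ∈ {z : F | ∀ t : F, ∃ x : F, t ≤ x ∧ z ≤ f x}) ∧
    (∀ ε : F, 0 < ε →
      ¬(Set.image (fun c => c + ε) {z : F | ∀ t : F, ∃ x : F, t ≤ x ∧ z ≤ f x}) ⊆
        {z : F | ∀ t : F, ∃ x : F, t ≤ x ∧ z ≤ f x}) := by
  constructor
  · intro z hz w hw t
    obtain ⟨x, hx, hzx⟩ := hz t
    exact ⟨x, hx, hw.trans hzx⟩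
  · intro ε hε hsub
    obtain ⟨d, hd⟩ := hf (ε / 2) (by linarith)
    have hzC : (f d - ε / 2) ∈ {z : F | ∀ t : F, ∃ x : F, t ≤ x ∧ z ≤ f x} := by
      intro t
      refine ⟨max t d, le_max_left _ _, ?_⟩
      have := hd d (max t d) le_rfl (le_max_right _ _)
      have := abs_lt.mp this
      linarith [this.1, this.2]
    have hmem : (f d - ε / 2 + ε) ∈ {z : F | ∀ t : F, ∃ x : F, t ≤ x ∧ z ≤ f x} :=
      hsub ⟨f d - ε / 2, hzC, rfl⟩
    obtain ⟨x, hx, hle⟩ := hmem d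
    have := abs_lt.mp (hd d x le_rfl hx)
    linarith [this.1, this.2]
end

section
/- If f : F → F is Cauchy at infinity and the set C = {z ∈ F : for all t there exists x ≥ t with z ≤ f(x)} has a supremum α in F, then f converges to α at infinity: for every ε > 0 there is d ∈ F such that |f(x) − α| ≤ ε for all x ≥ d. -/
/-- If `f` is Cauchy at infinity and the cut `C = {z : ∀ t, ∃ x ≥ t, z ≤ f x}`
has a supremum `α`, then `f` converges to `α` at infinity. -/
theorem cauchy_at_infinity_tendsto_sup (F : Type*) [Field F] [LinearOrder F] [IsStrictOrderedRing F]
    (f : F → F)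
    (hf : ∀ ε : F, 0 < ε → ∃ d : F, ∀ x y : F, d ≤ x → d ≤ y → |f x - f y| < ε)
    (α : F) (hα : IsLUB {z : F | ∀ t : F, ∃ x : F, t ≤ x ∧ z ≤ f x} α) :
    ∀ ε : F, 0 < ε → ∃ d : F, ∀ x : F, d ≤ x → |f x - α| ≤ ε := by
  intro ε hε
  obtain ⟨d, hd⟩ := hf (ε / 2) (by linarith)
  refine ⟨d, fun x hx => ?_⟩
  have h1 : f x - ε / 2 ≤ α := by
    apply hα.1
    intro t
    refine ⟨max t d, le_max_left _ _, ?_⟩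
    have := hd x (max t d) hx (le_max_right _ _)
    have := abs_lt.mp this
    linarith [this.1, this.2]
  have h2 : α ≤ f x + ε / 2 := by
    apply hα.2
    intro z hz
    obtain ⟨y, hy, hzy⟩ := hz d
    have := abs_lt.mp (hd x y hx hy)
    linarith [this.1, this.2]
  rw [abs_le]
  constructor <;> linarith
end

section
/- The fraction field of the ring of generalized power series with real coefficients and nonpositive rational exponents is dense in the field of generalized power series with real coefficients and rational exponents. -/
/-- The field `[[ℝ^ℚ]]` of Hahn series is linearly ordered by comparing the
leading coefficient (the coefficient at the minimum of the support) of the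
difference: `x < y` iff the leading coefficient of `y - x` is positive. -/
def HahnSeries.Lt (x y : HahnSeries ℚ ℝ) : Prop :=
  0 < (y - x).leadingCoeff

/-- If a Hahn series has positive coefficient at `q` and vanishing coefficients
below `q`, then its leading coefficient is positive. -/
lemma leadingCoeff_pos_of_coeff {z : HahnSeries ℚ ℝ} {q : ℚ}
    (hq : 0 < z.coeff q) (h : ∀ p < q, z.coeff p = 0) : 0 < z.leadingCoeff := by
  have hz : z ≠ 0 := HahnSeries.ne_zero_of_coeff_ne_zero (ne_of_gt hq)
  have hle : z.order ≤ q := HahnSeries.order_le_of_coeff_ne_zero (ne_of_gt hq)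
  have heq : z.order = q := by
    rcases lt_or_eq_of_le hle with hlt | heq
    · exact absurd (h _ hlt) (HahnSeries.coeff_order_eq_zero.not.2 hz)
    · exact heq
  rw [HahnSeries.leadingCoeff_eq, heq]
  exact hq

/-- The fraction field of `R = [[ℝ^{ℚ^{≤0}}]]` (Hahn series with support in the
nonpositive rationals) is dense in `[[ℝ^ℚ]]`: strictly between any two elements
of `[[ℝ^ℚ]]` lies a quotient of two elements of `R`. -/
theorem fractionField_dense_in_hahnSeries
    (x y : HahnSeries ℚ ℝ) (hxy : HahnSeries.Lt x y) :
    ∃ a b : HahnSeries ℚ ℝ,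
      a.support ⊆ Set.Iic 0 ∧ b.support ⊆ Set.Iic 0 ∧ b ≠ 0 ∧
      HahnSeries.Lt x (a / b) ∧ HahnSeries.Lt (a / b) y := by
  classical
  set q : ℚ := (y - x).order with hqdef
  set c : ℝ := (y - x).coeff q with hcdef
  have hc : 0 < c := by
    have := hxy
    rwa [HahnSeries.Lt, HahnSeries.leadingCoeff_eq] at this
  -- the tail of x above q
  set tail : HahnSeries ℚ ℝ :=
    ⟨fun p => if q < p then x.coeff p else 0, by
      apply x.isPWO_support'.mono
      intro p hp
      rw [Function.mem_support] at hp ⊢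
      intro h0
      apply hp
      split_ifs
      exacts [h0, rfl]⟩ with htaildef
  have htail_coeff : ∀ p, tail.coeff p = if q < p then x.coeff p else 0 := fun p => rfl
  -- the midpoint candidate
  set w : HahnSeries ℚ ℝ := x - tail + HahnSeries.single q (c / 2) with hwdef
  have hwx : w - x = HahnSeries.single q (c / 2) - tail := by
    rw [hwdef]; ring
  have hwx_coeff_q : (w - x).coeff q = c / 2 := by
    rw [hwx]
    simp [HahnSeries.coeff_single_same, htail_coeff q, lt_irrefl]
  have hwx_coeff_lt : ∀ p < q, (w - x).coeff p = 0 := by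
    intro p hp
    rw [hwx]
    simp [HahnSeries.coeff_single_of_ne (ne_of_lt hp), htail_coeff p, not_lt_of_gt hp]
  -- x < w
  have hxw : HahnSeries.Lt x w :=
    leadingCoeff_pos_of_coeff (hwx_coeff_q ▸ half_pos hc) hwx_coeff_lt
  -- w < y
  have hyw : y - w = (y - x) - (w - x) := by ring
  have hwy : HahnSeries.Lt w y := by
    apply leadingCoeff_pos_of_coeff (q := q)
    · rw [hyw, HahnSeries.coeff_sub, hwx_coeff_q, ← hcdef]
      linarith
    · intro p hp
      rw [hyw, HahnSeries.coeff_sub, hwx_coeff_lt p hp,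
        HahnSeries.coeff_eq_zero_of_lt_order (hqdef ▸ hp), sub_zero]
  -- support of w is contained in Iic q
  have hwsupp : ∀ p, q < p → w.coeff p = 0 := by
    intro p hp
    rw [hwdef]
    simp [HahnSeries.coeff_single_of_ne (ne_of_gt hp), htail_coeff p, hp]
  -- now write w = a / b
  set s : ℚ := max q 0 with hsdef
  set b : HahnSeries ℚ ℝ := HahnSeries.single (-s) (1 : ℝ) with hbdef
  have hb : b ≠ 0 := HahnSeries.single_ne_zero one_ne_zero
  refine ⟨w * b, b, ?_, ?_, hb, ?_, ?_⟩
  · intro p hp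
    simp only [HahnSeries.mem_support] at hp
    have hps : (w * b).coeff p = w.coeff (p + s) := by
      have := HahnSeries.coeff_mul_single_add (r := (1 : ℝ)) (x := w)
        (a := p + s) (b := -s)
      rw [mul_one] at this
      simpa using this
    rw [hps] at hp
    rw [Set.mem_Iic]
    by_contra hp0
    push_neg at hp0
    have hqs : q ≤ s := le_max_left q 0
    have : q < p + s := by linarith
    exact hp (hwsupp _ this)
  · intro p hp
    simp only [hbdef, HahnSeries.mem_support] at hp
    rw [Set.mem_Iic]
    by_cases h : p = -s
    · have : (0:ℚ) ≤ s := le_max_right q 0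
      rw [h]; linarith
    · exact absurd (HahnSeries.coeff_single_of_ne h) hp
  · rwa [mul_div_cancel_right₀ w hb]
  · rwa [mul_div_cancel_right₀ w hb]
end

section
/- The map on a Hahn series field [[F^G]] induced by doubling exponents (sending the characteristic function of {g} to that of {2g}) is an ordered field automorphism when G is 2-divisible, and its fixed points are exactly the elements of F (constant series supported at 0). -/
/-- The Hahn series field `[[F^G]]` is ordered by positivity of the leading
coefficient (the coefficient at the minimum of the support) of the
difference. -/
def HahnSeries.Lt' {G : Type*} [AddCommGroup G] [LinearOrder G] [IsOrderedAddMonoid G]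
    {F : Type*} [Field F] [LinearOrder F] [IsStrictOrderedRing F] (x y : HahnSeries G F) : Prop :=
  0 < (y - x).leadingCoeff

set_option synthInstance.maxHeartbeats 1000000

section Aux

variable {G : Type*} [AddCommGroup G] [LinearOrder G] [IsOrderedAddMonoid G] {F : Type*} [Field F]
  [LinearOrder F] [IsStrictOrderedRing F]

/-- The doubling order isomorphism of a 2-divisible linearly ordered abelian group. -/
private noncomputable def dblIso (hdiv : ∀ g : G, ∃ h : G, h + h = g) : G ≃o G :=
  StrictMono.orderIsoOfSurjective (fun a => a + a) (fun _ _ h => add_lt_add h h)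
    (fun g => (hdiv g).imp fun _ hh => hh)

private lemma dblIso_apply (hdiv : ∀ g : G, ∃ h : G, h + h = g) (a : G) :
    dblIso hdiv a = a + a := rfl

private lemma embDomain_symm_comp (e : G ≃o G) (x : HahnSeries G F) :
    HahnSeries.embDomain e.symm.toOrderEmbedding
      (HahnSeries.embDomain e.toOrderEmbedding x) = x := by
  ext a
  have h1 : (HahnSeries.embDomain e.symm.toOrderEmbedding
      (HahnSeries.embDomain e.toOrderEmbedding x)).coeff (e.symm.toOrderEmbedding (e a)) =
      (HahnSeries.embDomain e.toOrderEmbedding x).coeff (e a) := HahnSeries.embDomain_coeff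
  have h2 : (HahnSeries.embDomain e.toOrderEmbedding x).coeff (e.toOrderEmbedding a) =
      x.coeff a := HahnSeries.embDomain_coeff
  simpa using h1.trans h2

/-- The doubling ring automorphism of a Hahn series field. -/
private noncomputable def dblEquiv (hdiv : ∀ g : G, ∃ h : G, h + h = g) (F : Type*)
    [Field F] [LinearOrder F] [IsStrictOrderedRing F] : HahnSeries G F ≃+* HahnSeries G F where
  toFun := HahnSeries.embDomain (dblIso hdiv).toOrderEmbedding
  invFun := HahnSeries.embDomain (dblIso hdiv).symm.toOrderEmbedding
  left_inv x := embDomain_symm_comp _ x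
  right_inv x := by
    have := embDomain_symm_comp (F := F) (dblIso hdiv).symm x
    simpa using this
  map_add' x y := HahnSeries.embDomain_add _ x y
  map_mul' x y := HahnSeries.embDomain_mul _ (fun a b => add_add_add_comm a b a b) x y

private lemma no_descending {s : Set G} (hs : s.IsWF) (u : G → G) (P : G → Prop) {g : G}
    (hg : g ∈ s) (hPg : P g)
    (hstep : ∀ a, a ∈ s → P a → u a ∈ s ∧ P (u a) ∧ u a < a) : False := by
  have key : ∀ n, u^[n] g ∈ s ∧ P (u^[n] g) := by
    intro n
    induction n with
    | zero => exact ⟨hg, hPg⟩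
    | succ n ih =>
      rw [Function.iterate_succ_apply']
      exact ⟨(hstep _ ih.1 ih.2).1, (hstep _ ih.1 ih.2).2.1⟩
  have hanti : StrictAnti (fun n => u^[n] g) := strictAnti_nat_of_succ_lt fun n => by
    simpa [Function.iterate_succ_apply'] using (hstep _ (key n).1 (key n).2).2.2
  exact Set.isWF_iff_no_descending_seq.mp hs _ hanti fun n => (key n).1

end Aux

/-- For a 2-divisible linearly ordered abelian group `G` and a linearly
ordered field `F`, the map on `[[F^G]]` induced by doubling exponents
(`(A f).coeff (g + g) = f.coeff g`) is an ordered field automorphism, and its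
fixed points are exactly the series supported at `0`, i.e. the elements of
`F`. -/
theorem doubling_automorphism (G : Type*) [AddCommGroup G] [LinearOrder G] [IsOrderedAddMonoid G]
    (hdiv : ∀ g : G, ∃ h : G, h + h = g)
    (F : Type*) [Field F] [LinearOrder F] [IsStrictOrderedRing F] :
    ∃ A : HahnSeries G F ≃+* HahnSeries G F,
      (∀ (f : HahnSeries G F) (g : G), (A f).coeff (g + g) = f.coeff g) ∧
      (∀ x y : HahnSeries G F, HahnSeries.Lt' x y ↔ HahnSeries.Lt' (A x) (A y)) ∧
      (∀ f : HahnSeries G F, A f = f ↔ f.support ⊆ {0}) := by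
  classical
  set e := dblIso (G := G) hdiv with he
  set A := dblEquiv hdiv F with hA
  have hAco : ∀ (f : HahnSeries G F) (a : G), (A f).coeff (e a) = f.coeff a := by
    intro f a
    exact HahnSeries.embDomain_coeff (f := e.toOrderEmbedding)
  have hAcoeff : ∀ (f : HahnSeries G F) (g : G), (A f).coeff (g + g) = f.coeff g := by
    intro f g
    simpa [he, dblIso_apply] using hAco f g
  have hAsub : ∀ f : HahnSeries G F, (A f).support ⊆ e '' f.support := by
    intro f
    exact HahnSeries.support_embDomain_subset
  -- leading coefficients are preserved
  have hlead : ∀ f : HahnSeries G F, (A f).leadingCoeff = f.leadingCoeff := by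
    intro f
    rcases eq_or_ne f 0 with rfl | hf
    · rw [map_zero]
    · have hAf : A f ≠ 0 := fun h => hf (A.injective (by rw [h, map_zero]))
      rw [HahnSeries.leadingCoeff_of_ne_zero hf, HahnSeries.leadingCoeff_of_ne_zero hAf,
        HahnSeries.untop_orderTop_of_ne_zero hf, HahnSeries.untop_orderTop_of_ne_zero hAf]
      have hne : f.support.Nonempty := HahnSeries.support_nonempty_iff.2 hf
      have hAne : (A f).support.Nonempty := HahnSeries.support_nonempty_iff.2 hAf
      set m := f.isWF_support.min (HahnSeries.support_nonempty_iff.2 hf) with hm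
      have hmmem : m ∈ f.support := Set.IsWF.min_mem _ _
      have hmem : e m ∈ (A f).support := by
        rw [HahnSeries.mem_support, hAco]
        exact hmmem
      have h1 : (A f).isWF_support.min (HahnSeries.support_nonempty_iff.2 hAf) ≤ e m :=
        Set.IsWF.min_le _ _ hmem
      have h2 : e m ≤ (A f).isWF_support.min (HahnSeries.support_nonempty_iff.2 hAf) := by
        obtain ⟨a, ha, hEq⟩ := hAsub f (Set.IsWF.min_mem _ (HahnSeries.support_nonempty_iff.2 hAf))
        rw [← hEq]
        exact e.le_iff_le.mpr (Set.IsWF.min_le _ _ ha)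
      rw [le_antisymm h1 h2, hAco]
  refine ⟨A, hAcoeff, ?_, ?_⟩
  · intro x y
    unfold HahnSeries.Lt'
    have hsub : A (y - x) = A y - A x := by simp
    rw [← hsub, hlead]
  · intro f
    constructor
    · -- fixed points are supported at 0
      intro hfix g hg
      by_contra hg0
      have hco : ∀ a : G, f.coeff (a + a) = f.coeff a := fun a => by
        have := hAcoeff f a; rwa [hfix] at this
      have hdiv' := hdiv
      choose half hhalf using hdiv'
      set u : G → G := fun a => if 0 < a then half a else a + a with hu
      refine no_descending f.isWF_support u (fun a => a ≠ 0) hg hg0 ?_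
      intro a ha ha0
      rcases lt_or_gt_of_ne ha0 with hneg | hpos
      · have hua : u a = a + a := if_neg (not_lt.2 hneg.le)
        refine ⟨?_, ?_, ?_⟩
        · rw [HahnSeries.mem_support, hua, hco]; exact ha
        · rw [hua]
          exact ne_of_lt (by simpa using add_lt_add hneg hneg)
        · rw [hua]; exact add_lt_iff_neg_left.mpr hneg
      · have hhpos : 0 < half a := by
          by_contra hle
          have hle' : half a ≤ 0 := not_lt.1 hle
          have h2 : half a + half a ≤ 0 := by simpa using add_le_add hle' hle'
          rw [hhalf] at h2
          exact absurd hpos (not_lt.2 h2)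
        have hua : u a = half a := if_pos hpos
        refine ⟨?_, ?_, ?_⟩
        · rw [HahnSeries.mem_support, hua]
          have : f.coeff (half a) = f.coeff a := by
            rw [← hco (half a), hhalf]
          rw [this]; exact ha
        · rw [hua]; exact ne_of_gt hhpos
        · rw [hua]
          calc half a < half a + half a := (lt_add_iff_pos_left (half a)).mpr hhpos
            _ = a := hhalf a
    · -- series supported at 0 are fixed
      intro hsupp
      ext g
      rcases eq_or_ne g 0 with rfl | hg0
      · simpa using hAcoeff f 0
      · have hfg : f.coeff g = 0 := by
          by_contra h
          exact hg0 (hsupp h)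
        obtain ⟨h, hh⟩ := hdiv g
        have hh0 : h ≠ 0 := by rintro rfl; simp at hh; exact hg0 hh.symm
        have hfh : f.coeff h = 0 := by
          by_contra hc
          exact hh0 (hsupp hc)
        rw [hfg, ← hh, hAcoeff, hfh]
end

section
/- Every uncountable ordered field contains a transcendence basis over ℚ that is dense in the field. -/
open Cardinal Set

section Auxiliary

variable {F : Type*} [Field F] [LinearOrder F] [IsStrictOrderedRing F]

/-- An interval in a linearly ordered field has at least the cardinality of the field. -/
lemma mk_le_mk_Ioo {x y : F} (hxy : x < y) : #F ≤ #(Set.Ioo x y) := by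
  have hyx : (0 : F) < y - x := sub_pos.2 hxy
  set n : F → F := fun t => t / (1 + |t|) with hn
  have hpos : ∀ t : F, (0 : F) < 1 + |t| := fun t => by positivity
  have hmem : ∀ t : F, n t ∈ Set.Ioo (-1 : F) 1 := by
    intro t
    constructor
    · rw [hn, lt_div_iff₀ (hpos t)]
      nlinarith [neg_abs_le t, abs_nonneg t]
    · rw [hn, div_lt_one (hpos t)]
      linarith [le_abs_self t]
  have hinj : Function.Injective n := by
    have hleft : ∀ t, (n t) / (1 - |n t|) = t := by
      intro t
      have h1 : |n t| = |t| / (1 + |t|) := by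
        rw [hn, abs_div, abs_of_pos (hpos t)]
      have h2 : 1 - |n t| = 1 / (1 + |t|) := by
        rw [h1]; field_simp; ring
      rw [h2, hn]
      simp only []
      rw [div_div_div_cancel_right₀]
      · simp
      · exact (hpos t).ne'
    intro a b hab
    rw [← hleft a, ← hleft b, hab]
  have hmem2 : ∀ t : F, x + (y - x) * (n t + 1) / 2 ∈ Set.Ioo x y := by
    intro t
    obtain ⟨h1, h2⟩ := hmem t
    constructor <;> nlinarith
  refine Cardinal.mk_le_of_injective
    (f := fun t => (⟨x + (y - x) * (n t + 1) / 2, hmem2 t⟩ : Set.Ioo x y)) ?_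
  intro a b hab
  have h := congrArg Subtype.val hab
  simp only at h
  apply hinj
  have hyx' : (y - x) ≠ 0 := ne_of_gt hyx
  have h2 : (y - x) * (n a + 1) = (y - x) * (n b + 1) := by linarith
  have h3 := mul_left_cancel₀ hyx' h2
  linarith



/-- Transcendence over a subfield implies transcendence over any `ℚ`-subalgebra contained
in that subfield. -/
lemma transcendental_adjoin_of_subfield {K : Subfield F} {s : Set F} (hs : s ⊆ (K : Set F))
    {a : F} (h : Transcendental K a) : Transcendental (Algebra.adjoin ℚ s) a := by
  set A := Algebra.adjoin ℚ s with hA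
  have hsub : (A : Set F) ⊆ (K : Set F) := by
    intro z hz
    induction hz using Algebra.adjoin_induction with
    | mem w hw => exact hs hw
    | algebraMap q => rw [eq_ratCast (algebraMap ℚ F) q]; exact SubfieldClass.ratCast_mem K q
    | add u v _ _ hu hv => exact add_mem hu hv
    | mul u v _ _ hu hv => exact mul_mem hu hv
  intro hal
  apply h
  obtain ⟨p, hp0, hpa⟩ := hal
  set φ : A →+* K := RingHom.codRestrict ((Subalgebra.val A).toRingHom) K.toSubring
    (fun z => hsub z.2) with hφ
  refine ⟨p.map φ, ?_, ?_⟩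
  · refine Polynomial.map_ne_zero_iff ?_ |>.2 hp0
    intro u v huv
    have h2 : ((φ u : K) : F) = ((φ v : K) : F) := congrArg Subtype.val huv
    exact Subtype.ext (show (u : F) = (v : F) from h2)
  · rw [Polynomial.aeval_def, Polynomial.eval₂_map]
    have : (algebraMap K F).comp φ = algebraMap A F := by
      ext z; rfl
    rw [this]
    exact hpa

set_option synthInstance.maxHeartbeats 1000000 in
set_option maxHeartbeats 1000000 in
lemma mk_algebraic_le (K : Subfield F) : #{t : F // IsAlgebraic K t} ≤ max #K ℵ₀ := by
  have hinj : Function.Injective (algebraMap K F) := (algebraMap K F).injective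
  haveI : NoZeroSMulDivisors K F := inferInstance
  haveI : Algebra.IsAlgebraic K (integralClosure K F) := by
    constructor
    intro z
    have hz : IsIntegral K (z : F) := z.2
    exact ((isIntegral_algHom_iff (integralClosure K F).val Subtype.val_injective).1 hz).isAlgebraic
  haveI : NoZeroSMulDivisors K (integralClosure K F) := by
    infer_instance
  have h1 : #(integralClosure K F) ≤ max #K ℵ₀ :=
    Algebra.IsAlgebraic.cardinalMk_le_max K (integralClosure K F)
  have h2 : {t : F | IsAlgebraic K t} = (integralClosure K F : Set F) := by
    ext t
    exact isAlgebraic_iff_isIntegral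
  calc #{t : F // IsAlgebraic K t} = #(integralClosure K F) :=
        Cardinal.mk_congr (Equiv.setCongr h2)
    _ ≤ max #K ℵ₀ := h1

lemma exists_transcendental_Ioo (hF : ℵ₀ < #F) (s : Set F) (hs : #s < #F)
    {x y : F} (hxy : x < y) :
    ∃ t : F, (x < t ∧ t < y) ∧ Transcendental (Subfield.closure s) t := by
  set K := Subfield.closure s with hK
  have hKcard : #K < #F := (Subfield.cardinalMk_closure_le_max s).trans_lt (max_lt hs hF)
  have halg : #{t : F // IsAlgebraic K t} < #F :=
    (mk_algebraic_le K).trans_lt (max_lt hKcard hF)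
  by_contra h
  push_neg at h
  have hsub : ∀ u : Set.Ioo x y, IsAlgebraic K (u : F) := by
    intro u
    have := h u ⟨u.2.1, u.2.2⟩
    unfold Transcendental at this
    rwa [not_not] at this
  have hle : #(Set.Ioo x y) ≤ #{t : F // IsAlgebraic K t} := by
    refine Cardinal.mk_le_of_injective
      (f := fun u : Set.Ioo x y => (⟨(u : F), hsub u⟩ : {t : F // IsAlgebraic K t})) ?_
    intro a b hab
    have h2 : ((⟨(a : F), hsub a⟩ : {t : F // IsAlgebraic K t}) : F) = ((⟨(b : F), hsub b⟩ : {t : F // IsAlgebraic K t}) : F) := congrArg Subtype.val hab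
    exact Subtype.ext (show (a : F) = (b : F) from h2)
  exact absurd ((mk_le_mk_Ioo hxy).trans hle) (not_le.2 halg)

lemma algebraicIndependent_of_wellOrder {ι : Type*} (r : ι → ι → Prop) [IsWellOrder ι r]
    {g : ι → F} (H : ∀ i, Transcendental (Subfield.closure (g '' {j | r j i})) (g i)) :
    AlgebraicIndependent ℚ ((↑) : Set.range g → F) := by
  classical
  have hqinj : Function.Injective (algebraMap ℚ F) := (algebraMap ℚ F).injective
  have key : ∀ n : ℕ, ∀ t : Set F, t ⊆ Set.range g → t.Finite → t.ncard ≤ n →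
      AlgebraicIndependent ℚ ((↑) : t → F) := by
    intro n
    induction n with
    | zero =>
      intro t _ htf h0
      have : t = ∅ := by
        rw [← Set.ncard_eq_zero htf]
        omega
      subst this
      exact (algebraicIndependent_empty_iff ℚ F).2 hqinj
    | succ n IH =>
      intro t hts htf hcard
      rcases t.eq_empty_or_nonempty with rfl | hne
      · exact (algebraicIndependent_empty_iff ℚ F).2 hqinj
      · haveI : Finite ↥t := htf.to_subtype
        have hchoice : ∀ a : ↥t, ∃ i : ι, g i = (a : F) := fun a => hts a.2
        choose idx hidx using hchoice
        obtain ⟨b, -, hb⟩ := Set.exists_max_image (Set.univ : Set ↥t)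
          (fun a : ↥t => Ordinal.typein r (idx a)) Set.finite_univ
          (by obtain ⟨a, ha⟩ := hne; exact ⟨⟨a, ha⟩, Set.mem_univ _⟩)
        set a₀ : F := (b : F) with ha₀
        have ha₀t : a₀ ∈ t := b.2
        set u : Set F := t \ {a₀} with hu
        have husub : u ⊆ g '' {j | r j (idx b)} := by
          intro a ⟨hat, hane⟩
          have hle := hb ⟨a, hat⟩ (Set.mem_univ _)
          rcases lt_or_eq_of_le hle with hlt | heq
          · exact ⟨idx ⟨a, hat⟩, (Ordinal.typein_lt_typein r).1 hlt, hidx ⟨a, hat⟩⟩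
          · exfalso
            apply hane
            have : idx ⟨a, hat⟩ = idx b := Ordinal.typein_injective r heq
            have h2 := hidx ⟨a, hat⟩
            rw [this, hidx b] at h2
            exact h2.symm
        have hu_indep : AlgebraicIndependent ℚ ((↑) : u → F) := by
          refine IH u ((Set.diff_subset).trans hts) htf.diff ?_
          have h3 := Set.ncard_diff_singleton_lt_of_mem ha₀t htf
          rw [← hu] at h3
          omega
        have htr : Transcendental (Algebra.adjoin ℚ u) a₀ := by
          refine transcendental_adjoin_of_subfield (K := Subfield.closure (g '' {j | r j (idx b)}))
            (husub.trans Subfield.subset_closure) ?_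
          have := H (idx b)
          rwa [hidx b] at this
        have ha' : a₀ ∉ u := fun h => h.2 rfl
        have hins : t = insert a₀ u := by
          rw [hu, Set.insert_diff_singleton, Set.insert_eq_self.2 ha₀t]
        rw [hins]
        convert ((Subtype.range_coe ▸ hu_indep.option_iff_transcendental a₀).2 htr).comp _
          (Set.subtypeInsertEquivOption ha').injective
        ext x
        by_cases h : ↑x = a₀ <;> simp [h, Set.subtypeInsertEquivOption]
  exact algebraicIndependent_of_finite _ (fun t hts htf => key t.ncard t hts htf le_rfl)

end Auxiliary

/-- Every uncountable linearly ordered field has a transcendence basis over `ℚ`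
which is dense in the field. -/
theorem uncountable_field_dense_transcendence_basis (F : Type*)
    [Field F] [LinearOrder F] [IsStrictOrderedRing F] (hF : Cardinal.aleph0 < Cardinal.mk F) :
    ∃ S : Set F, IsTranscendenceBasis ℚ ((↑) : S → F) ∧
      ∀ x y : F, x < y → ∃ s ∈ S, x < s ∧ s < y := by
  classical
  set P := {p : F × F // p.1 < p.2} with hP
  have hPF : #P = #F := by
    apply le_antisymm
    · calc #P ≤ #(F × F) := Cardinal.mk_subtype_le _
        _ = #F * #F := by rw [Cardinal.mk_prod]; simp
        
        _ = #F := Cardinal.mul_eq_self hF.le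
    · refine Cardinal.mk_le_of_injective
        (f := fun t : F => (⟨(t, t + 1), lt_add_one t⟩ : P)) ?_
      intro a b hab
      exact congrArg (fun p : P => p.1.1) hab
  obtain ⟨r, wo, hr⟩ := Cardinal.ord_eq P
  haveI := wo
  have hlt : ∀ p : P, #{q // r q p} < #F := by
    intro p
    show (Ordinal.typein r p).card < #F
    exact hPF ▸ Cardinal.card_typein_lt (r := r) p hr
  have hstep : ∀ (p : P) (s : Set F), #s < #F →
      ∃ t : F, (p.1.1 < t ∧ t < p.1.2) ∧ Transcendental (Subfield.closure s) t :=
    fun p s hs => exists_transcendental_Ioo hF s hs p.2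
  set f : P → F := IsWellFounded.wf.fix (C := fun _ => F) (fun p IH =>
    Classical.choose (hstep p (Set.range fun q : {q // r q p} => IH q q.2)
      (Cardinal.mk_range_le.trans_lt (hlt p)))) with hf
  have hf_eq : ∀ p : P, f p = Classical.choose (hstep p (Set.range fun q : {q // r q p} => f q)
      (Cardinal.mk_range_le.trans_lt (hlt p))) := by
    intro p
    rw [hf]
    exact WellFounded.fix_eq _ _ p
  have hspec : ∀ p : P, (p.1.1 < f p ∧ f p < p.1.2) ∧
      Transcendental (Subfield.closure (Set.range fun q : {q // r q p} => f q)) (f p) := by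
    intro p
    rw [hf_eq p]
    exact Classical.choose_spec (hstep p (Set.range fun q : {q // r q p} => f q)
      (Cardinal.mk_range_le.trans_lt (hlt p)))
  have hftr : ∀ p : P, Transcendental (Subfield.closure (f '' {q | r q p})) (f p) := by
    intro p
    have h2 := (hspec p).2
    rwa [Set.image_eq_range f {q | r q p}]
  have hS₀ : AlgebraicIndependent ℚ ((↑) : Set.range f → F) :=
    algebraicIndependent_of_wellOrder r hftr
  obtain ⟨u, husub, hmax⟩ := exists_maximal_algebraicIndependent (Set.range f) Set.univ
    (Set.subset_univ _) hS₀
  refine ⟨u, ⟨hmax.prop.1, fun s hs hus => ?_⟩, fun x y hxy => ?_⟩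
  · simp only [Subtype.range_coe_subtype, Set.setOf_mem_eq] at *
    exact hmax.eq_of_le ⟨hs, Set.subset_univ _⟩ hus
  · exact ⟨f ⟨(x, y), hxy⟩, husub ⟨⟨(x, y), hxy⟩, rfl⟩,
      (hspec ⟨(x, y), hxy⟩).1.1, (hspec ⟨(x, y), hxy⟩).1.2⟩
end
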